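/- Let Γ be a Hermitian positive semidefinite n×n matrix, Λ a complex symmetric n×n matrix, and consider the 2n×2n complex symmetric matrix A = [[Λ†, Γ],[Γ^T, Λ]] and X = [[0, I],[I, 0]]. Then I - XA > 0 (as a Hermitian matrix) if and only if Γ < I and Λ†(I - Γ^T)⁻¹Λ < I - Γ. -/

import Mathlib

open Matrix
open scoped ComplexOrder

section aux

lemma aux_posDef_fromBlocks₁₁ {m l : Type*} [Fintype m] [DecidableEq m] [Fintype l]
    {A : Matrix m m ℂ} (B : Matrix m l ℂ) (D : Matrix l l ℂ) (hA : A.PosDef) [Invertible A] :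
    (fromBlocks A B Bᴴ D).PosDef ↔ (D - Bᴴ * A⁻¹ * B).PosDef := by
  rw [posDef_iff_dotProduct_mulVec, posDef_iff_dotProduct_mulVec, Matrix.IsHermitian.fromBlocks₁₁ _ _ hA.1]
  refine and_congr_right fun hH => ⟨fun h x hx => ?_, fun h z hz => ?_⟩
  · have := h (x := -((A⁻¹ * B) *ᵥ x) ⊕ᵥ x) (by
      intro hc
      apply hx
      have := congrFun hc
      funext i; simpa using this (Sum.inr i))
    rwa [dotProduct_mulVec, Matrix.schur_complement_eq₁₁ B D _ _ hA.1, neg_add_cancel,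
      dotProduct_zero, zero_add, ← dotProduct_mulVec] at this
  · obtain ⟨x, y, rfl⟩ : ∃ x y, z = x ⊕ᵥ y :=
      ⟨z ∘ Sum.inl, z ∘ Sum.inr, by funext i; cases i <;> rfl⟩
    rw [dotProduct_mulVec, Matrix.schur_complement_eq₁₁ B D _ _ hA.1]
    rcases eq_or_ne y 0 with hy | hy
    · have hx : x ≠ 0 := by
        intro hx0; apply hz; subst hx0 hy; funext i; cases i <;> rfl
      have h1 := (posDef_iff_dotProduct_mulVec.1 hA).2 (x := x + (A⁻¹ * B) *ᵥ y) (by simpa [hy] using hx)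
      rw [dotProduct_mulVec] at h1
      simpa [hy] using h1
    · have h1 := (posSemidef_iff_dotProduct_mulVec.1 hA.posSemidef).2 (x + (A⁻¹ * B) *ᵥ y)
      have h2 := h (x := y) hy
      rw [dotProduct_mulVec] at h1 h2
      exact lt_of_lt_of_le h2 (le_add_of_nonneg_left h1)

lemma aux_block_posDef_fst {m l : Type*} [Fintype m] [Fintype l]
    {A : Matrix m m ℂ} {B : Matrix m l ℂ} {C : Matrix l m ℂ} {D : Matrix l l ℂ}
    (h : (fromBlocks A B C D).PosDef) : A.PosDef := by
  rw [posDef_iff_dotProduct_mulVec]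
  refine ⟨?_, fun x hx => ?_⟩
  · have := h.1
    rw [isHermitian_fromBlocks_iff] at this
    exact this.1
  · have := (posDef_iff_dotProduct_mulVec.1 h).2 (x := x ⊕ᵥ 0) (by
      intro hc; apply hx; funext i
      simpa using congrFun hc (Sum.inl i))
    rw [dotProduct_mulVec] at this ⊢
    simpa [Function.star_sumElim, vecMul_fromBlocks, dotProduct_mulVec] using this

end aux

/-- For `Γ ⪰ 0` Hermitian and `Λ` complex symmetric, with
`A = [[Λᴴ, Γ],[Γᵀ, Λ]]` and `X = [[0, I],[I, 0]]`, one has `I - XA ≻ 0` iff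
`Γ ≺ I` and `Λᴴ (I - Γᵀ)⁻¹ Λ ≺ I - Γ`. -/
theorem one_sub_XA_posDef_iff {n : ℕ}
    (Γ Λ : Matrix (Fin n) (Fin n) ℂ) (hΓ : Γ.PosSemidef) (hΛ : Λ.IsSymm) :
    ((1 : Matrix (Fin n ⊕ Fin n) (Fin n ⊕ Fin n) ℂ) -
        (Matrix.fromBlocks 0 1 1 0) * Matrix.fromBlocks Λᴴ Γ Γᵀ Λ).PosDef ↔
      ((1 - Γ).PosDef ∧ ((1 - Γ) - Λᴴ * (1 - Γᵀ)⁻¹ * Λ).PosDef) := by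
  have hblock : (1 : Matrix (Fin n ⊕ Fin n) (Fin n ⊕ Fin n) ℂ) -
      (Matrix.fromBlocks 0 1 1 0) * Matrix.fromBlocks Λᴴ Γ Γᵀ Λ =
      fromBlocks (1 - Γᵀ) (-Λ) (-Λ)ᴴ (1 - Γ) := by
    rw [← fromBlocks_one, fromBlocks_multiply, sub_eq_add_neg, fromBlocks_neg,
      fromBlocks_add]
    simp [sub_eq_add_neg]
  have htr : (1 - Γᵀ) = (1 - Γ)ᵀ := by simp
  have hiff : (1 - Γ).PosDef ↔ (1 - Γᵀ).PosDef := by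
    rw [htr]
    exact ⟨fun h => h.transpose, fun h => by simpa using h.transpose⟩
  rw [hblock]
  constructor
  · intro h
    have hA : (1 - Γᵀ).PosDef := aux_block_posDef_fst h
    have hA1 : (1 - Γ).PosDef := hiff.2 hA
    haveI := hA.isUnit.invertible
    refine ⟨hA1, ?_⟩
    have := (aux_posDef_fromBlocks₁₁ (-Λ) (1 - Γ) hA).1 h
    simpa using this
  · rintro ⟨h1, h2⟩
    have hA : (1 - Γᵀ).PosDef := hiff.1 h1
    haveI := hA.isUnit.invertible
    refine (aux_posDef_fromBlocks₁₁ (-Λ) (1 - Γ) hA).2 ?_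
    simpa using h2
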